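/- For every integer n ≥ 4 there exists a strong tournament D on n vertices (a strongly connected digraph in which every pair of distinct vertices is joined by exactly one arc) that has exactly two noncritical vertices. (In particular, no lower bound on the minimal vertex degree can guarantee three noncritical vertices in a strongly connected digraph.) -/

import Mathlib

/-- A digraph (given by its adjacency/arc relation `Adj`) is strongly connected if
every vertex can reach every other vertex by a directed path. -/
def IsStronglyConnected {V : Type*} (Adj : V → V → Prop) : Prop :=
  ∀ x y : V, Relation.ReflTransGen Adj x y

/-- The degree of a vertex `x`: the number of vertices `y ≠ x` joined to `x`
by an arc in at least one direction. -/
noncomputable def degree {V : Type*} (Adj : V → V → Prop) (x : V) : ℕ :=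
  {y : V | y ≠ x ∧ (Adj x y ∨ Adj y x)}.ncard

/-- A vertex `v` is noncritical if the digraph obtained by deleting `v`
(induced on the remaining vertices) is strongly connected. -/
def Noncritical {V : Type*} (Adj : V → V → Prop) (v : V) : Prop :=
  IsStronglyConnected (fun a b : {u : V // u ≠ v} => Adj a b)

private lemma chain_reach' {V : Type*} (Adj : V → V → Prop) (f : ℕ → V) :
    ∀ b a : ℕ, a ≤ b → (∀ i, a ≤ i → i < b → Adj (f i) (f (i+1))) →
    ∀ x y : V, f a = x → f b = y → Relation.ReflTransGen Adj x y := by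
  intro b
  induction b with
  | zero =>
    intro a ha _ x y hx hy
    obtain rfl : a = 0 := Nat.le_zero.mp ha
    rw [← hx, ← hy]
  | succ b ih =>
    intro a ha h x y hx hy
    rcases Nat.eq_or_lt_of_le ha with rfl | hlt
    · rw [← hx, ← hy]
    · exact (ih a (by omega) (fun i hi hib => h i hi (by omega)) x (f b) hx rfl).tail
        (hy ▸ h b (by omega) (by omega))

/-- element of the vertex-deleted subtype -/
private def el {n : ℕ} (v : Fin n) (m : ℕ) (h : m < n) (hne : m ≠ v.val) :
    {u : Fin n // u ≠ v} :=
  ⟨⟨m, h⟩, fun he => hne (congrArg Fin.val he)⟩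

@[simp] private lemma el_val {n : ℕ} (v : Fin n) (m : ℕ) (h : m < n) (hne : m ≠ v.val) :
    ((el v m h hne : {u : Fin n // u ≠ v}) : Fin n).val = m := rfl

private lemma el_eq {n : ℕ} (v : Fin n) (m : ℕ) (h : m < n) (hne : m ≠ v.val)
    (c : {u : Fin n // u ≠ v}) (hc : (c : Fin n).val = m) : el v m h hne = c :=
  Subtype.ext (Fin.ext (by simp [hc]))

/-- For every `n ≥ 4` there is a strong tournament on `n` vertices (a strongly
connected digraph in which any two distinct vertices are joined by exactly one
arc) with exactly two noncritical vertices. -/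
theorem exists_strong_tournament_with_exactly_two_noncritical (n : ℕ) (hn : 4 ≤ n) :
    ∃ Adj : Fin n → Fin n → Prop,
      (∀ x, ¬ Adj x x) ∧
      (∀ x y : Fin n, x ≠ y → Xor' (Adj x y) (Adj y x)) ∧
      IsStronglyConnected Adj ∧
      (∃ v₁ v₂ : Fin n, v₁ ≠ v₂ ∧ Noncritical Adj v₁ ∧ Noncritical Adj v₂ ∧
        ∀ v, Noncritical Adj v → v = v₁ ∨ v = v₂) := by
  refine ⟨fun x y => y.val = x.val + 1 ∨ y.val + 2 ≤ x.val, ?_, ?_, ?_, ?_⟩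
  · intro x; omega
  · intro x y hxy
    have : x.val ≠ y.val := fun h => hxy (Fin.ext h)
    simp only [Xor', Xor]
    omega
  · have h0 : ∀ x : Fin n, Relation.ReflTransGen
        (fun x y : Fin n => y.val = x.val + 1 ∨ y.val + 2 ≤ x.val) ⟨0, by omega⟩ x := by
      intro x
      refine chain_reach' (fun x y : Fin n => y.val = x.val + 1 ∨ y.val + 2 ≤ x.val) (fun i => ⟨min i (n-1), by omega⟩) x.val 0 (by omega)
        (fun i hi hib => by left; (try simp only [Fin.val_mk]); omega) _ _ ?_ ?_
      · exact Fin.ext (by (try simp only [Fin.val_mk]); omega)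
      · exact Fin.ext (by (try simp only [Fin.val_mk]); omega)
    have h1 : ∀ x : Fin n, Relation.ReflTransGen
        (fun x y : Fin n => y.val = x.val + 1 ∨ y.val + 2 ≤ x.val) x ⟨0, by omega⟩ := by
      intro x
      rcases Nat.lt_or_ge x.val 2 with hx | hx
      · rcases Nat.lt_or_ge x.val 1 with hx0 | hx1
        · have : x = ⟨0, by omega⟩ := Fin.ext (by (try simp only [Fin.val_mk]); omega)
          rw [this]
        · refine Relation.ReflTransGen.head (b := ⟨2, by omega⟩)
            (by left; (try simp only [Fin.val_mk]); omega) ?_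
          exact Relation.ReflTransGen.single (by right; (try simp only [Fin.val_mk]); omega)
      · exact Relation.ReflTransGen.single (by right; (try simp only [Fin.val_mk]); omega)
    intro x y
    exact (h1 x).trans (h0 y)
  · refine ⟨⟨0, by omega⟩, ⟨n-1, by omega⟩, ?_, ?_, ?_, ?_⟩
    · intro h
      have := congrArg Fin.val h
      simp only [Fin.val_mk] at this
      omega
    · -- deleting 0: hub is vertex 1
      set v : Fin n := ⟨0, by omega⟩ with hvdef
      have hvval : v.val = 0 := rfl
      intro a b
      have key : ∀ c : {u : Fin n // u ≠ v},
          Relation.ReflTransGen (fun a b : {u : Fin n // u ≠ v} =>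
            (b : Fin n).val = (a : Fin n).val + 1 ∨ (b : Fin n).val + 2 ≤ (a : Fin n).val)
            (el v 1 (by omega) (by omega)) c := by
        intro c
        have hc1 : 1 ≤ (c : Fin n).val := by
          rcases Nat.eq_zero_or_pos (c : Fin n).val with h | h
          · exact absurd (Fin.ext (by omega)) c.2
          · exact h
        have hcn := (c : Fin n).isLt
        refine chain_reach' (fun a b : {u : Fin n // u ≠ v} =>
            (b : Fin n).val = (a : Fin n).val + 1 ∨ (b : Fin n).val + 2 ≤ (a : Fin n).val)
          (fun i => el v (min (max i 1) (n-1)) (by omega) (by omega)) (c : Fin n).val 1 hc1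
          (fun i hi hib => by left; (try simp only [el_val]); omega) _ _ ?_ ?_
        · exact el_eq _ _ _ _ _ (by (try simp only [el_val]); omega)
        · exact el_eq _ _ _ _ _ (by (try simp only [el_val]); omega)
      have key2 : ∀ c : {u : Fin n // u ≠ v},
          Relation.ReflTransGen (fun a b : {u : Fin n // u ≠ v} =>
            (b : Fin n).val = (a : Fin n).val + 1 ∨ (b : Fin n).val + 2 ≤ (a : Fin n).val)
            c (el v 1 (by omega) (by omega)) := by
        intro c
        have hc1 : 1 ≤ (c : Fin n).val := by
          rcases Nat.eq_zero_or_pos (c : Fin n).val with h | h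
          · exact absurd (Fin.ext (by omega)) c.2
          · exact h
        rcases Nat.lt_or_ge (c : Fin n).val 3 with hc | hc
        · rcases Nat.lt_or_ge (c : Fin n).val 2 with hc2 | hc2
          · rw [el_eq v 1 (by omega) (by omega) c (by omega)]
          · refine Relation.ReflTransGen.head (b := el v 3 (by omega) (by omega))
              (by left; (try simp only [el_val]); omega) ?_
            exact Relation.ReflTransGen.single (by right; (try simp only [el_val]); omega)
        · exact Relation.ReflTransGen.single (by right; (try simp only [el_val]); omega)
      exact (key2 a).trans (key b)
    · -- deleting n-1: hub is vertex 0
      set v : Fin n := ⟨n-1, by omega⟩ with hvdef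
      have hvval : v.val = n - 1 := rfl
      intro a b
      have bound : ∀ c : {u : Fin n // u ≠ v}, (c : Fin n).val ≤ n - 2 := by
        intro c
        have h1 := (c : Fin n).isLt
        have h2 : (c : Fin n).val ≠ n - 1 := fun h =>
          c.2 (Fin.ext (by omega))
        omega
      have key : ∀ c : {u : Fin n // u ≠ v},
          Relation.ReflTransGen (fun a b : {u : Fin n // u ≠ v} =>
            (b : Fin n).val = (a : Fin n).val + 1 ∨ (b : Fin n).val + 2 ≤ (a : Fin n).val)
            (el v 0 (by omega) (by omega)) c := by
        intro c
        have hc := bound c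
        refine chain_reach' (fun a b : {u : Fin n // u ≠ v} =>
            (b : Fin n).val = (a : Fin n).val + 1 ∨ (b : Fin n).val + 2 ≤ (a : Fin n).val)
          (fun i => el v (min i (n-2)) (by omega) (by omega)) (c : Fin n).val 0 (by omega)
          (fun i hi hib => by left; (try simp only [el_val]); omega) _ _ ?_ ?_
        · exact el_eq _ _ _ _ _ (by (try simp only [el_val]); omega)
        · exact el_eq _ _ _ _ _ (by (try simp only [el_val]); omega)
      have key2 : ∀ c : {u : Fin n // u ≠ v},
          Relation.ReflTransGen (fun a b : {u : Fin n // u ≠ v} =>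
            (b : Fin n).val = (a : Fin n).val + 1 ∨ (b : Fin n).val + 2 ≤ (a : Fin n).val)
            c (el v 0 (by omega) (by omega)) := by
        intro c
        have hc := bound c
        rcases Nat.lt_or_ge (c : Fin n).val 2 with h2 | h2
        · rcases Nat.lt_or_ge (c : Fin n).val 1 with h1 | h1
          · rw [el_eq v 0 (by omega) (by omega) c (by omega)]
          · refine Relation.ReflTransGen.head (b := el v 2 (by omega) (by omega))
              (by left; (try simp only [el_val]); omega) ?_
            exact Relation.ReflTransGen.single (by right; (try simp only [el_val]); omega)
        · exact Relation.ReflTransGen.single (by right; (try simp only [el_val]); omega)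
      exact (key2 a).trans (key b)
    · -- only 0 and n-1 are noncritical
      intro v hv
      by_contra hcon
      push_neg at hcon
      obtain ⟨hv0, hvlast⟩ := hcon
      have hv1 : 1 ≤ v.val := by
        rcases Nat.eq_zero_or_pos v.val with h | h
        · exact absurd (Fin.ext (a := v) (b := ⟨0, by omega⟩)
            (by (try simp only [Fin.val_mk]); omega)) hv0
        · exact h
      have hv2 : v.val ≤ n - 2 := by
        have h1 := v.isLt
        have h2 : v.val ≠ n - 1 := fun h =>
          hvlast (Fin.ext (by (try simp only [Fin.val_mk]); omega))
        omega
      have hpath := hv (el v (v.val - 1) (by omega) (by omega))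
        (el v (v.val + 1) (by omega) (by omega))
      have inv : ∀ c : {u : Fin n // u ≠ v},
          Relation.ReflTransGen (fun a b : {u : Fin n // u ≠ v} =>
            (b : Fin n).val = (a : Fin n).val + 1 ∨ (b : Fin n).val + 2 ≤ (a : Fin n).val)
            (el v (v.val - 1) (by omega) (by omega)) c →
          (c : Fin n).val < v.val := by
        intro c hc
        induction hc with
        | refl => (try simp only [el_val]); omega
        | @tail u w hsteps hstep ih =>
          have hw : (w : Fin n).val ≠ v.val := fun h => w.2 (Fin.ext h)
          rcases hstep with h | h <;> omega
      have := inv _ hpath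
      simp only [el_val] at this
      omega
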